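/- Let k ≥ 2 be an integer. There exists a continuously differentiable function h : (1/k, 1) → (0,1) such that h(p) = 1 − (1 − p·h(p))^k for all p ∈ (1/k, 1). (The percolation function θ̂_k is differentiable away from the critical point 1/k.) -/

import Mathlib

open Set Filter Topology

noncomputable def percS (k : ℕ) (u : ℝ) : ℝ := ∑ i ∈ Finset.range k, u ^ i

noncomputable def percF (k : ℕ) (u : ℝ) : ℝ := (percS k u)⁻¹

lemma percS_pos {k : ℕ} (hk : 2 ≤ k) {u : ℝ} (hu : 0 ≤ u) : 0 < percS k u :=
  Finset.sum_pos' (fun i _ => pow_nonneg hu i)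
    ⟨0, Finset.mem_range.2 (by omega), by simp⟩

lemma percS_lt {k : ℕ} (hk : 2 ≤ k) {u v : ℝ} (hu : 0 ≤ u) (huv : u < v) :
    percS k u < percS k v := by
  refine Finset.sum_lt_sum (fun i _ => pow_le_pow_left₀ hu huv.le i)
    ⟨1, Finset.mem_range.2 (by omega), by simpa using huv⟩

lemma percS_zero {k : ℕ} (hk : 2 ≤ k) : percS k 0 = 1 := by
  simp [percS, zero_pow_eq, Finset.sum_ite_eq', Finset.mem_range.2 (by omega : 0 < k)]

lemma percS_one (k : ℕ) : percS k 1 = k := by simp [percS]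

lemma percS_contDiff (k : ℕ) : ContDiff ℝ 1 (percS k) :=
  ContDiff.sum fun i _ => contDiff_id.pow i

lemma percS_geom {k : ℕ} (u : ℝ) : (1 - u) * percS k u = 1 - u ^ k := by
  have := geom_sum_mul u k
  unfold percS
  nlinarith [this]

lemma percF_injOn {k : ℕ} (hk : 2 ≤ k) {u v : ℝ} (hu : u ∈ Ioo (0:ℝ) 1)
    (hv : v ∈ Ioo (0:ℝ) 1) (h : percF k u = percF k v) : u = v := by
  have h' : percS k u = percS k v := inv_injective h
  rcases lt_trichotomy u v with h1 | h1 | h1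
  · exact absurd h' (percS_lt hk hu.1.le h1).ne
  · exact h1
  · exact absurd h'.symm (percS_lt hk hv.1.le h1).ne

theorem percolation_function_differentiable (k : ℕ) (hk : 2 ≤ k) :
    ∃ h : ℝ → ℝ, ContDiffOn ℝ 1 h (Set.Ioo (1 / (k : ℝ)) 1) ∧
      ∀ p ∈ Set.Ioo (1 / (k : ℝ)) 1,
        h p ∈ Set.Ioo (0 : ℝ) 1 ∧ h p = 1 - (1 - p * h p) ^ k := by
  classical
  have hkR : (0:ℝ) < k := by positivity
  -- surjectivity via IVT
  have hfcont : ContinuousOn (percF k) (Icc (0:ℝ) 1) :=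
    ((percS_contDiff k).continuous.continuousOn).inv₀
      fun u hu => (percS_pos hk hu.1).ne'
  have hf0 : percF k 0 = 1 := by simp [percF, percS_zero hk]
  have hf1 : percF k 1 = 1 / (k:ℝ) := by simp [percF, percS_one, one_div]
  have hsurj : ∀ p ∈ Ioo (1/(k:ℝ)) 1, ∃ u, u ∈ Ioo (0:ℝ) 1 ∧ percF k u = p := by
    intro p hp
    have hsub := intermediate_value_Ioo' (by norm_num : (0:ℝ) ≤ 1) hfcont
    rw [hf0, hf1] at hsub
    obtain ⟨u, hu, hfu⟩ := hsub hp
    exact ⟨u, hu, hfu⟩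
  set ψ : ℝ → ℝ := fun p =>
    if hp : p ∈ Ioo (1/(k:ℝ)) 1 then (hsurj p hp).choose else 0 with hψdef
  have hψspec : ∀ p (hp : p ∈ Ioo (1/(k:ℝ)) 1),
      ψ p ∈ Ioo (0:ℝ) 1 ∧ percF k (ψ p) = p := by
    intro p hp
    have := (hsurj p hp).choose_spec
    simp only [hψdef, dif_pos hp]
    exact this
  -- ψ is C¹ at each point
  have hψcd : ∀ p ∈ Ioo (1/(k:ℝ)) 1, ContDiffAt ℝ 1 ψ p := by
    intro p hp
    obtain ⟨hu, hfup⟩ := hψspec p hp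
    set u := ψ p with hudef
    -- derivative of percS at u
    have hSd : HasDerivAt (percS k)
        (∑ i ∈ Finset.range k, (i:ℝ) * u ^ (i-1)) u :=
      HasDerivAt.fun_sum fun i _ => hasDerivAt_pow i u
    set D := ∑ i ∈ Finset.range k, (i:ℝ) * u ^ (i-1) with hDdef
    have hDpos : 0 < D := by
      have h1 : ((1:ℕ):ℝ) * u ^ (1-1) ≤ D :=
        Finset.single_le_sum (f := fun i : ℕ => (i:ℝ) * u ^ (i-1))
          (fun i _ => mul_nonneg (Nat.cast_nonneg i) (pow_nonneg hu.1.le _))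
          (Finset.mem_range.2 (by omega))
      simpa using lt_of_lt_of_le (by norm_num) h1
    have hSu : percS k u ≠ 0 := (percS_pos hk hu.1.le).ne'
    have hfd : HasDerivAt (percF k) (-D / percS k u ^ 2) u := hSd.inv hSu
    have hd : -D / percS k u ^ 2 ≠ 0 :=
      (div_neg_of_neg_of_pos (neg_lt_zero.2 hDpos)
        (pow_pos (percS_pos hk hu.1.le) 2)).ne
    have hfc : ContDiffAt ℝ 1 (percF k) u :=
      ((percS_contDiff k).contDiffAt).inv hSu
    have hFD : HasFDerivAt (percF k)
        (ContinuousLinearEquiv.unitsEquivAut ℝ (Units.mk0 _ hd) : ℝ →L[ℝ] ℝ) u :=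
      hfd.hasFDerivAt_equiv hd
    set g := hfc.localInverse hFD one_ne_zero with hgdef
    have hgc : ContDiffAt ℝ 1 g p := by
      rw [← hfup]; exact hfc.to_localInverse hFD one_ne_zero
    have hgp : g p = u := by
      rw [← hfup]; exact hfc.localInverse_apply_image hFD one_ne_zero
    have hgright : ∀ᶠ q in 𝓝 p, percF k (g q) = q := by
      rw [← hfup]
      exact (hfc.hasStrictFDerivAt' hFD one_ne_zero).eventually_right_inverse
    have hgcont : ContinuousAt g p := by
      rw [← hfup]
      exact (hfc.hasStrictFDerivAt' hFD one_ne_zero).localInverse_continuousAt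
    have hgmem : ∀ᶠ q in 𝓝 p, g q ∈ Ioo (0:ℝ) 1 :=
      hgcont.eventually_mem (by rw [hgp]; exact isOpen_Ioo.mem_nhds hu)
    have hPmem : ∀ᶠ q in 𝓝 p, q ∈ Ioo (1/(k:ℝ)) 1 := isOpen_Ioo.eventually_mem hp
    have heq : ψ =ᶠ[𝓝 p] g := by
      filter_upwards [hgright, hgmem, hPmem] with q h1 h2 h3
      obtain ⟨hq1, hq2⟩ := hψspec q h3
      exact percF_injOn hk hq1 h2 (hq2.trans h1.symm)
    exact hgc.congr_of_eventuallyEq heq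
  refine ⟨fun p => 1 - ψ p ^ k, ?_, ?_⟩
  · intro p hp
    exact ((contDiffAt_const.sub ((hψcd p hp).pow k)).contDiffWithinAt)
  · intro p hp
    obtain ⟨hu, hfup⟩ := hψspec p hp
    set u := ψ p with hudef
    have hSu : percS k u ≠ 0 := (percS_pos hk hu.1.le).ne'
    have huk : u ^ k ∈ Ioo (0:ℝ) 1 :=
      ⟨pow_pos hu.1 k, pow_lt_one₀ hu.1.le hu.2 (by omega)⟩
    have hbeta : (fun p => 1 - ψ p ^ k) p = 1 - u ^ k := rfl
    rw [hbeta]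
    refine ⟨Set.mem_Ioo.2 ⟨by linarith [huk.2], by linarith [huk.1]⟩, ?_⟩
    have hph : p * (1 - u ^ k) = 1 - u := by
      rw [← hfup, percF, ← percS_geom u]
      field_simp
    rw [hph, sub_sub_cancel]
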